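/- In the braid group B_5, let γ = [1,2,2,3,2,2,3,4,3,2,1,2,3,2,4,4,3,3,2,1,3,3,3,2,2,3,4,3,2,2,1,2,2,3,2,3] (the braid word for o9_40582) and α = [2,-3,-2,-1,-3,-3,-2]. Then α⁻¹·γ·α = [(1,2,3,4)^5, (1,2,3)^4, 2,1,3,3,4,-3]. -/

import Mathlib

/-- The Artin braid relations on `n` generators (so this presents the braid
group on `n + 1` strands); generator `i : Fin n` corresponds to `σ_{i+1}`. -/
def braidRels (n : ℕ) : Set (FreeGroup (Fin n)) :=
  { r | (∃ i j : Fin n, (i : ℕ) + 1 = j ∧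
          r = FreeGroup.of i * FreeGroup.of j * FreeGroup.of i *
              (FreeGroup.of j * FreeGroup.of i * FreeGroup.of j)⁻¹) ∨
        (∃ i j : Fin n, (i : ℕ) + 2 ≤ (j : ℕ) ∧
          r = FreeGroup.of i * FreeGroup.of j * (FreeGroup.of j * FreeGroup.of i)⁻¹) }

/-- The braid group on `n + 1` strands, with `n` Artin generators. -/
def BraidGroup (n : ℕ) : Type := PresentedGroup (braidRels n)

instance (n : ℕ) : Group (BraidGroup n) :=
  inferInstanceAs (Group (PresentedGroup (braidRels n)))

/-- The Artin generator `σ_{i+1}` of the braid group on `n + 1` strands. -/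
def braidGen {n : ℕ} (i : Fin n) : BraidGroup n := PresentedGroup.of i

/-- The letter of a braid word: a nonzero integer `a` denotes
`σ_{|a|}^{sign a}`. (Out-of-range letters give `1`.) -/
noncomputable def braidLetter (n : ℕ) (a : ℤ) : BraidGroup n :=
  if h : a.natAbs - 1 < n then
    (braidGen (⟨a.natAbs - 1, h⟩ : Fin n)) ^ (if 0 < a then (1 : ℤ) else -1)
  else 1

/-- The element of the braid group represented by a braid word. -/
noncomputable def braidWord (n : ℕ) (w : List ℤ) : BraidGroup n :=
  (w.map (braidLetter n)).prod

-- ======== auxiliary machinery ========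

lemma braidWord_nil (n : ℕ) : braidWord n [] = 1 := rfl

lemma braidWord_cons (n : ℕ) (a : ℤ) (t : List ℤ) :
    braidWord n (a :: t) = braidLetter n a * braidWord n t := by
  simp [braidWord]

lemma braidWord_append (n : ℕ) (u v : List ℤ) :
    braidWord n (u ++ v) = braidWord n u * braidWord n v := by
  simp [braidWord]

lemma rel_one {r : FreeGroup (Fin 4)} (h : r ∈ braidRels 4) :
    (PresentedGroup.mk (braidRels 4)) r = (1 : BraidGroup 4) :=
  (QuotientGroup.eq_one_iff r).mpr (Subgroup.subset_normalClosure h)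

lemma braid_rel {i j : Fin 4} (h : (i : ℕ) + 1 = j) :
    braidGen i * braidGen j * braidGen i = braidGen j * braidGen i * braidGen j := by
  have h1 := rel_one (Or.inl ⟨i, j, h, rfl⟩)
  rw [map_mul, map_mul, map_inv, map_mul, map_mul] at h1
  exact mul_inv_eq_one.mp h1

lemma comm_rel {i j : Fin 4} (h : (i : ℕ) + 2 ≤ (j : ℕ)) :
    Commute (braidGen i) (braidGen j) := by
  have h1 := rel_one (Or.inr ⟨i, j, h, rfl⟩)
  rw [map_mul, map_inv, map_mul] at h1
  exact mul_inv_eq_one.mp h1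

lemma braid_gen {i j : Fin 4} (h : (i : ℕ) + 1 = j ∨ (j : ℕ) + 1 = i) :
    braidGen i * braidGen j * braidGen i = braidGen j * braidGen i * braidGen j := by
  rcases h with h | h
  · exact braid_rel h
  · exact (braid_rel h).symm

lemma comm_gen {i j : Fin 4} (h : (i : ℕ) + 2 ≤ (j : ℕ) ∨ (j : ℕ) + 2 ≤ (i : ℕ)) :
    Commute (braidGen i) (braidGen j) := by
  rcases h with h | h
  · exact comm_rel h
  · exact (comm_rel h).symm

lemma letter_eq {x : ℤ} (h1 : 1 ≤ x.natAbs) (h4 : x.natAbs ≤ 4) :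
    braidLetter 4 x =
      (braidGen (⟨x.natAbs - 1, by omega⟩ : Fin 4)) ^ (if 0 < x then (1 : ℤ) else -1) := by
  unfold braidLetter
  rw [dif_pos]

lemma braidLetter_neg {a : ℤ} (h : a ≠ 0) :
    braidLetter 4 (-a) = (braidLetter 4 a)⁻¹ := by
  unfold braidLetter
  rw [Int.natAbs_neg]
  split
  · rcases lt_or_gt_of_ne h with hn | hp
    · have e1 : ¬ (0 < a) := by omega
      have e2 : 0 < -a := by omega
      simp [e1, e2, not_le.mpr hn]
    · have e1 : 0 < a := hp
      have e2 : ¬ (0 < -a) := by omega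
      simp [e1, e2, not_lt.mpr hp.le]
  · simp

lemma braid_zpow {i j : Fin 4} (h : (i : ℕ) + 1 = j ∨ (j : ℕ) + 1 = i) {e : ℤ}
    (he : e = 1 ∨ e = -1) :
    (braidGen i) ^ e * (braidGen j) ^ e * (braidGen i) ^ e =
      (braidGen j) ^ e * (braidGen i) ^ e * (braidGen j) ^ e := by
  have hb := braid_gen h
  rcases he with rfl | rfl
  · simpa using hb
  · simp only [zpow_neg, zpow_one]
    have h2 := congrArg (·⁻¹) hb
    simp only [mul_inv_rev, ← mul_assoc] at h2
    exact h2

/-- valid elementary rewriting rules on braid words -/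
def okRuleB : List ℤ → List ℤ → Bool
  | [x, y], [] => decide (y = -x ∧ x ≠ 0)
  | [], [x, y] => decide (y = -x ∧ x ≠ 0)
  | [x, y], [y', x'] =>
      decide (y' = y ∧ x' = x ∧ 1 ≤ x.natAbs ∧ x.natAbs ≤ 4 ∧ 1 ≤ y.natAbs ∧ y.natAbs ≤ 4 ∧
        (x.natAbs + 2 ≤ y.natAbs ∨ y.natAbs + 2 ≤ x.natAbs))
  | [x, y, x2], [y2, x3, y3] =>
      decide (x2 = x ∧ x3 = x ∧ y2 = y ∧ y3 = y ∧
        1 ≤ x.natAbs ∧ x.natAbs ≤ 4 ∧ 1 ≤ y.natAbs ∧ y.natAbs ≤ 4 ∧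
        (x.natAbs + 1 = y.natAbs ∨ y.natAbs + 1 = x.natAbs) ∧ (0 < x ↔ 0 < y))
  | _, _ => false

lemma sound_cancel (x : ℤ) (hx : x ≠ 0) : braidWord 4 [x, -x] = braidWord 4 [] := by
  simp [braidWord_cons, braidWord_nil, braidLetter_neg hx]

lemma comm_nat {a b : ℕ} (ha1 : 1 ≤ a) (ha4 : a ≤ 4) (hb1 : 1 ≤ b) (hb4 : b ≤ 4)
    (hd : a + 2 ≤ b ∨ b + 2 ≤ a) :
    Commute (braidGen (⟨a - 1, by omega⟩ : Fin 4)) (braidGen (⟨b - 1, by omega⟩ : Fin 4)) := by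
  apply comm_gen
  show a - 1 + 2 ≤ b - 1 ∨ b - 1 + 2 ≤ a - 1
  omega

lemma sound_comm (x y : ℤ) (hx1 : 1 ≤ x.natAbs) (hx4 : x.natAbs ≤ 4) (hy1 : 1 ≤ y.natAbs)
    (hy4 : y.natAbs ≤ 4) (hd : x.natAbs + 2 ≤ y.natAbs ∨ y.natAbs + 2 ≤ x.natAbs) :
    braidWord 4 [x, y] = braidWord 4 [y, x] := by
  simp only [braidWord_cons, braidWord_nil, mul_one]
  rw [letter_eq hx1 hx4, letter_eq hy1 hy4]
  exact (((comm_nat hx1 hx4 hy1 hy4 hd).zpow_zpow _ _)).eq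

lemma sound_braid (x y : ℤ) (hx1 : 1 ≤ x.natAbs) (hx4 : x.natAbs ≤ 4) (hy1 : 1 ≤ y.natAbs)
    (hy4 : y.natAbs ≤ 4) (hadj : x.natAbs + 1 = y.natAbs ∨ y.natAbs + 1 = x.natAbs)
    (hsgn : 0 < x ↔ 0 < y) :
    braidWord 4 [x, y, x] = braidWord 4 [y, x, y] := by
  simp only [braidWord_cons, braidWord_nil, mul_one]
  rw [letter_eq hx1 hx4, letter_eq hy1 hy4]
  have hee : (if 0 < x then (1 : ℤ) else -1) = (if 0 < y then (1 : ℤ) else -1) := by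
    by_cases hx : 0 < x
    · simp [hx, hsgn.mp hx]
    · have hy : ¬ 0 < y := fun hy => hx (hsgn.mpr hy)
      simp [hx, hy]
  rw [hee]
  have hb := braid_zpow (i := (⟨x.natAbs - 1, by omega⟩ : Fin 4))
    (j := (⟨y.natAbs - 1, by omega⟩ : Fin 4))
    (by show x.natAbs - 1 + 1 = y.natAbs - 1 ∨ y.natAbs - 1 + 1 = x.natAbs - 1; omega)
    (e := if 0 < y then (1 : ℤ) else -1)
    (by by_cases hy : 0 < y <;> simp [hy])
  simp only [← mul_assoc]
  exact hb

lemma okRuleB_sound {m1 m2 : List ℤ} (h : okRuleB m1 m2 = true) :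
    braidWord 4 m1 = braidWord 4 m2 := by
  unfold okRuleB at h
  split at h
  · rw [decide_eq_true_eq] at h
    obtain ⟨rfl, hx⟩ := h
    exact sound_cancel _ hx
  · rw [decide_eq_true_eq] at h
    obtain ⟨rfl, hx⟩ := h
    exact (sound_cancel _ hx).symm
  · rw [decide_eq_true_eq] at h
    obtain ⟨rfl, rfl, hx1, hx4, hy1, hy4, hd⟩ := h
    exact sound_comm _ _ hx1 hx4 hy1 hy4 hd
  · rw [decide_eq_true_eq] at h
    obtain ⟨rfl, rfl, rfl, rfl, hx1, hx4, hy1, hy4, hadj, hsgn⟩ := h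
    exact sound_braid _ _ hx1 hx4 hy1 hy4 hadj hsgn
  · exact absurd h (by simp)

/-- apply one rewriting move `(p, m1, m2)` at position `p` -/
def applyMove (w : List ℤ) (mv : ℕ × List ℤ × List ℤ) : Option (List ℤ) :=
  if okRuleB mv.2.1 mv.2.2 && ((w.drop mv.1).take mv.2.1.length == mv.2.1) then
    some (w.take mv.1 ++ mv.2.2 ++ w.drop (mv.1 + mv.2.1.length))
  else none

lemma applyMove_sound {w w' : List ℤ} {mv : ℕ × List ℤ × List ℤ}
    (h : applyMove w mv = some w') : braidWord 4 w = braidWord 4 w' := by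
  unfold applyMove at h
  split at h
  · rename_i hc
    rw [Bool.and_eq_true, beq_iff_eq] at hc
    obtain ⟨hrule, hmatch⟩ := hc
    injection h with h'
    subst h'
    have hw : w = w.take mv.1 ++ mv.2.1 ++ w.drop (mv.1 + mv.2.1.length) := by
      have h2 := List.take_append_drop mv.2.1.length (w.drop mv.1)
      rw [hmatch] at h2
      rw [List.drop_drop] at h2
      conv_lhs => rw [← List.take_append_drop mv.1 w]
      rw [← h2]
      rw [List.append_assoc]
      try rw [Nat.add_comm mv.1 mv.2.1.length]
    conv_lhs => rw [hw]
    rw [braidWord_append, braidWord_append, braidWord_append, braidWord_append,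
      okRuleB_sound hrule]
  · exact absurd h (by simp)

/-- apply a list of moves -/
def applyMoves (w : List ℤ) : List (ℕ × List ℤ × List ℤ) → Option (List ℤ)
  | [] => some w
  | mv :: rest =>
    match applyMove w mv with
    | some w' => applyMoves w' rest
    | none => none

lemma applyMoves_sound : ∀ (ms : List (ℕ × List ℤ × List ℤ)) (w w' : List ℤ),
    applyMoves w ms = some w' → braidWord 4 w = braidWord 4 w'
  | [], w, w', h => by
    simp only [applyMoves] at h
    injection h with h'
    rw [h']
  | mv :: rest, w, w', h => by
    simp only [applyMoves] at h
    split at h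
    · rename_i w1 h1
      exact (applyMove_sound h1).trans (applyMoves_sound rest w1 w' h)
    · exact absurd h (by simp)

def invWord (w : List ℤ) : List ℤ := w.reverse.map (fun a => -a)

lemma braidWord_invWord : ∀ {w : List ℤ}, (∀ a ∈ w, a ≠ 0) →
    braidWord 4 (invWord w) = (braidWord 4 w)⁻¹
  | [], _ => by simp [invWord, braidWord_nil]
  | a :: t, h => by
    have ha : a ≠ 0 := h a (by simp)
    have ht : ∀ b ∈ t, b ≠ 0 := fun b hb => h b (by simp [hb])
    have : invWord (a :: t) = invWord t ++ [-a] := by simp [invWord]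
    rw [this, braidWord_append, braidWord_invWord ht, braidWord_cons, braidWord_nil,
      braidWord_cons, braidLetter_neg ha, mul_inv_rev]
    simp

def wordA : List ℤ := [2, -3, -2, -1, -3, -3, -2]
def wordG : List ℤ := [1, 2, 2, 3, 2, 2, 3, 4, 3, 2, 1, 2, 3, 2, 4, 4, 3, 3, 2, 1, 3, 3, 3, 2,
  2, 3, 4, 3, 2, 2, 1, 2, 2, 3, 2, 3]
def wordR : List ℤ := [1, 2, 3, 4, 1, 2, 3, 4, 1, 2, 3, 4, 1, 2, 3, 4, 1, 2, 3, 4, 1, 2, 3, 1,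
  2, 3, 1, 2, 3, 1, 2, 3, 2, 1, 3, 3, 4, -3]

set_option maxHeartbeats 2000000 in
def braidMoves : List (Nat × List ℤ × List ℤ) :=
  [(4, [], [-3, 3]),
  (5, [3, 2, 3], [2, 3, 2]),
  (7, [2, -2], []),
  (2, [3, 1], [1, 3]),
  (3, [3, -3], []),
  (40, [], [-2, 2]),
  (41, [2, 3, 2], [3, 2, 3]),
  (43, [3, -3], []),
  (39, [2, -2], []),
  (40, [2, -2], []),
  (35, [], [-2, 2]),
  (36, [2, 1, 2], [1, 2, 1]),
  (38, [], [-2, 2]),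
  (39, [2, 1, 2], [1, 2, 1]),
  (41, [1, 3], [3, 1]),
  (42, [1, 3], [3, 1]),
  (43, [1, -1], []),
  (34, [2, -2], []),
  (35, [2, -2], []),
  (38, [3, -3], []),
  (37, [3, -3], []),
  (36, [2, -2], []),
  (31, [], [-3, 3]),
  (32, [3, 4, 3], [4, 3, 4]),
  (34, [4, 2], [2, 4]),
  (35, [4, 1], [1, 4]),
  (36, [4, 1], [1, 4]),
  (37, [], [-3, 3]),
  (38, [3, 4, 3], [4, 3, 4]),
  (40, [4, -4], []),
  (30, [3, -3], []),
  (37, [3, -3], []),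
  (31, [], [-2, 2]),
  (32, [2, 3, 2], [3, 2, 3]),
  (34, [3, 1], [1, 3]),
  (35, [3, 1], [1, 3]),
  (36, [3, -3], []),
  (29, [2, 4], [4, 2]),
  (30, [2, -2], []),
  (30, [], [-2, 2]),
  (31, [2, 3, 2], [3, 2, 3]),
  (33, [3, 1], [1, 3]),
  (34, [3, 1], [1, 3]),
  (35, [], [-4, 4]),
  (36, [4, 3, 4], [3, 4, 3]),
  (38, [3, -3], []),
  (28, [2, 4], [4, 2]),
  (29, [2, -2], []),
  (28, [], [-3, 3]),
  (29, [3, 4, 3], [4, 3, 4]),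
  (31, [4, 2], [2, 4]),
  (32, [4, 1], [1, 4]),
  (33, [4, 1], [1, 4]),
  (34, [4, -4], []),
  (27, [3, -3], []),
  (31, [1, 3], [3, 1]),
  (32, [1, 4], [4, 1]),
  (33, [1, -1], []),
  (29, [], [-1, 1]),
  (30, [1, 2, 1], [2, 1, 2]),
  (32, [], [-3, 3]),
  (33, [3, 2, 3], [2, 3, 2]),
  (35, [2, 4], [4, 2]),
  (36, [2, -2], []),
  (24, [1, 3], [3, 1]),
  (25, [1, 3], [3, 1]),
  (26, [1, 4], [4, 1]),
  (27, [1, 3], [3, 1]),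
  (28, [1, -1], []),
  (27, [], [-2, 2]),
  (28, [2, 3, 2], [3, 2, 3]),
  (30, [3, 1], [1, 3]),
  (31, [3, -3], []),
  (23, [], [-3, 3]),
  (24, [3, 2, 3], [2, 3, 2]),
  (26, [], [-3, 3]),
  (27, [3, 2, 3], [2, 3, 2]),
  (29, [2, 4], [4, 2]),
  (30, [2, -2], []),
  (22, [3, -3], []),
  (23, [3, -3], []),
  (30, [], [-4, 4]),
  (31, [4, 3, 4], [3, 4, 3]),
  (33, [3, -3], []),
  (25, [], [-3, 3]),
  (26, [3, 4, 3], [4, 3, 4]),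
  (28, [4, 2], [2, 4]),
  (29, [4, 1], [1, 4]),
  (30, [4, 2], [2, 4]),
  (31, [4, -4], []),
  (24, [3, -3], []),
  (28, [], [-3, 3]),
  (29, [3, 2, 3], [2, 3, 2]),
  (31, [2, 4], [4, 2]),
  (32, [2, -2], []),
  (25, [], [-2, 2]),
  (26, [2, 3, 2], [3, 2, 3]),
  (28, [3, 1], [1, 3]),
  (29, [3, -3], []),
  (23, [2, 4], [4, 2]),
  (24, [2, -2], []),
  (26, [], [-2, 2]),
  (27, [2, 1, 2], [1, 2, 1]),
  (29, [1, 3], [3, 1]),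
  (30, [1, 4], [4, 1]),
  (31, [1, -1], []),
  (25, [2, -2], []),
  (27, [], [-4, 4]),
  (28, [4, 3, 4], [3, 4, 3]),
  (30, [3, -3], []),
  (23, [], [-3, 3]),
  (24, [3, 4, 3], [4, 3, 4]),
  (26, [4, 1], [1, 4]),
  (27, [4, 2], [2, 4]),
  (28, [4, -4], []),
  (21, [], [-2, 2]),
  (22, [2, 3, 2], [3, 2, 3]),
  (24, [3, -3], []),
  (18, [2, 4], [4, 2]),
  (19, [2, 4], [4, 2]),
  (20, [2, -2], []),
  (25, [], [-3, 3]),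
  (26, [3, 2, 3], [2, 3, 2]),
  (28, [2, 4], [4, 2]),
  (29, [2, -2], []),
  (23, [3, 1], [1, 3]),
  (24, [3, -3], []),
  (23, [], [-2, 2]),
  (24, [2, 1, 2], [1, 2, 1]),
  (26, [1, 3], [3, 1]),
  (27, [1, 4], [4, 1]),
  (28, [1, -1], []),
  (21, [2, 4], [4, 2]),
  (22, [2, -2], []),
  (24, [], [-4, 4]),
  (25, [4, 3, 4], [3, 4, 3]),
  (27, [3, -3], []),
  (21, [4, 1], [1, 4]),
  (22, [4, 2], [2, 4]),
  (23, [4, -4], []),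
  (22, [], [-3, 3]),
  (23, [3, 2, 3], [2, 3, 2]),
  (25, [2, 4], [4, 2]),
  (26, [2, -2], []),
  (20, [3, 1], [1, 3]),
  (21, [3, -3], []),
  (20, [], [-2, 2]),
  (21, [2, 1, 2], [1, 2, 1]),
  (23, [1, 3], [3, 1]),
  (24, [1, 4], [4, 1]),
  (25, [1, -1], []),
  (16, [], [-3, 3]),
  (17, [3, 2, 3], [2, 3, 2]),
  (19, [2, 4], [4, 2]),
  (20, [2, 4], [4, 2]),
  (21, [2, -2], []),
  (13, [], [-2, 2]),
  (14, [2, 3, 2], [3, 2, 3]),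
  (16, [3, 1], [1, 3]),
  (17, [3, -3], []),
  (10, [], [-3, 3]),
  (11, [3, 2, 3], [2, 3, 2]),
  (13, [2, 4], [4, 2]),
  (14, [2, -2], []),
  (8, [], [-2, 2]),
  (9, [2, 3, 2], [3, 2, 3]),
  (11, [3, -3], []),
  (7, [2, -2], []),
  (21, [], [-4, 4]),
  (22, [4, 3, 4], [3, 4, 3]),
  (24, [3, -3], []),
  (18, [4, 1], [1, 4]),
  (19, [4, 2], [2, 4]),
  (20, [4, -4], []),
  (19, [], [-3, 3]),
  (20, [3, 2, 3], [2, 3, 2]),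
  (22, [2, 4], [4, 2]),
  (23, [2, -2], []),
  (16, [], [-4, 4]),
  (17, [4, 3, 4], [3, 4, 3]),
  (19, [3, 1], [1, 3]),
  (20, [3, -3], []),
  (11, [], [-3, 3]),
  (12, [3, 4, 3], [4, 3, 4]),
  (14, [4, 2], [2, 4]),
  (15, [4, 1], [1, 4]),
  (16, [4, 2], [2, 4]),
  (17, [4, -4], []),
  (10, [3, -3], []),
  (17, [], [-2, 2]),
  (18, [2, 1, 2], [1, 2, 1]),
  (20, [1, 3], [3, 1]),
  (21, [1, 4], [4, 1]),
  (22, [1, -1], []),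
  (21, [4, -4], []),
  (20, [3, -3], []),
  (19, [2, -2], []),
  (18, [1, -1], []),
  (14, [], [-3, 3]),
  (15, [3, 2, 3], [2, 3, 2]),
  (17, [2, 4], [4, 2]),
  (18, [2, -2], []),
  (17, [4, -4], []),
  (16, [3, -3], []),
  (15, [2, -2], []),
  (11, [], [-2, 2]),
  (12, [2, 3, 2], [3, 2, 3]),
  (14, [3, 1], [1, 3]),
  (15, [3, -3], []),
  (14, [1, -1], []),
  (9, [2, 4], [4, 2]),
  (10, [2, -2], []),
  (9, [], [-3, 3]),
  (10, [3, 4, 3], [4, 3, 4]),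
  (12, [4, 2], [2, 4]),
  (13, [4, -4], []),
  (7, [], [-2, 2]),
  (8, [2, 3, 2], [3, 2, 3]),
  (10, [3, -3], []),
  (6, [2, -2], []),
  (9, [], [-2, 2]),
  (10, [2, 3, 2], [3, 2, 3]),
  (12, [3, -3], []),
  (11, [2, -2], []),
  (7, [2, 4], [4, 2]),
  (8, [2, -2], []),
  (5, [1, 3], [3, 1]),
  (6, [1, 4], [4, 1]),
  (7, [1, 3], [3, 1]),
  (8, [1, -1], []),
  (6, [], [-3, 3]),
  (7, [3, 4, 3], [4, 3, 4]),
  (9, [4, -4], []),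
  (5, [3, -3], []),
  (6, [3, -3], []),
  (3, [], [-3, 3]),
  (4, [3, 2, 3], [2, 3, 2]),
  (6, [2, 4], [4, 2]),
  (7, [2, -2], []),
  (1, [3, 1], [1, 3]),
  (2, [3, -3], []),
  (1, [], [-2, 2]),
  (2, [2, 1, 2], [1, 2, 1]),
  (4, [1, 3], [3, 1]),
  (5, [1, 4], [4, 1]),
  (6, [1, -1], []),
  (0, [2, -2], []),
  (3, [4, -4], []),
  (2, [3, -3], []),
  (1, [2, -2], []),
  (0, [1, -1], [])]

lemma key : braidWord 4 (invWord wordA ++ wordG ++ wordA ++ invWord wordR) = 1 := by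
  have h : applyMoves (invWord wordA ++ wordG ++ wordA ++ invWord wordR) braidMoves
      = some [] := by decide
  have h2 := applyMoves_sound _ _ _ h
  rw [braidWord_nil] at h2
  exact h2

theorem stmt17
    (γ α : BraidGroup 4)
    (hγ : γ = braidWord 4
      [1, 2, 2, 3, 2, 2, 3, 4, 3, 2, 1, 2, 3, 2, 4, 4, 3, 3, 2, 1, 3, 3, 3, 2, 2, 3, 4, 3, 2,
      2, 1, 2, 2, 3, 2, 3])
    (hα : α = braidWord 4
      [2, -3, -2, -1, -3, -3, -2]) :
    α⁻¹ * γ * α = braidWord 4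
      [1, 2, 3, 4, 1, 2, 3, 4, 1, 2, 3, 4, 1, 2, 3, 4, 1, 2, 3, 4, 1, 2, 3, 1, 2, 3, 1, 2, 3,
      1, 2, 3, 2, 1, 3, 3, 4, -3] := by
  subst hγ hα
  have k := key
  rw [braidWord_append, braidWord_append, braidWord_append,
    braidWord_invWord (w := wordA) (by decide),
    braidWord_invWord (w := wordR) (by decide), mul_inv_eq_one] at k
  exact k
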